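/- Let Γ be the subgroup of SL(2,ℤ) generated by the two matrices T³ = [[1,3],[0,1]] and T' = [[1,0],[-1,1]]. Then Γ has index exactly 8 in SL(2,ℤ). -/

import Mathlib

open Matrix

/-- The matrix `T³ = [[1,3],[0,1]]` in `SL(2,ℤ)`. -/
def Tcubed : SpecialLinearGroup (Fin 2) ℤ :=
  ⟨!![1, 3; 0, 1], by norm_num [Matrix.det_fin_two_of]⟩

/-- The matrix `T' = S T S⁻¹ = [[1,0],[-1,1]]` in `SL(2,ℤ)`. -/
def Tprime : SpecialLinearGroup (Fin 2) ℤ :=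
  ⟨!![1, 0; -1, 1], by norm_num [Matrix.det_fin_two_of]⟩

namespace WingerAux

abbrev SL2 := SpecialLinearGroup (Fin 2) ℤ

abbrev Gam : Subgroup SL2 := Subgroup.closure {Tcubed, Tprime}

def mk2 (a b c d : ℤ) (h : a * d - b * c = 1) : SL2 :=
  ⟨!![a, b; c, d], by rw [Matrix.det_fin_two_of]; exact h⟩

lemma coe_mk2 (a b c d : ℤ) (h : a * d - b * c = 1) :
    (mk2 a b c d h : Matrix (Fin 2) (Fin 2) ℤ) = !![a, b; c, d] := rfl

lemma sl2_ext {x y : SL2} (h : (x : Matrix (Fin 2) (Fin 2) ℤ) = (y : Matrix (Fin 2) (Fin 2) ℤ)) :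
    x = y := Subtype.ext h

lemma mat2_ext {a b c d a' b' c' d' : ℤ} (h1 : a = a') (h2 : b = b') (h3 : c = c')
    (h4 : d = d') : !![a, b; c, d] = !![a', b'; c', d'] := by rw [h1, h2, h3, h4]

lemma mk2_congr {a b c d a' b' c' d' : ℤ} (h : a * d - b * c = 1) (h' : a' * d' - b' * c' = 1)
    (h1 : a = a') (h2 : b = b') (h3 : c = c') (h4 : d = d') :
    mk2 a b c d h = mk2 a' b' c' d' h' := sl2_ext (mat2_ext h1 h2 h3 h4)

def t3 (k : ℤ) : SL2 := mk2 1 (3 * k) 0 1 (by ring)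
def tp (k : ℤ) : SL2 := mk2 1 0 (-k) 1 (by ring)

lemma t3_mem (k : ℤ) : t3 k ∈ Gam := by
  have hT : Tcubed ∈ Gam := Subgroup.subset_closure (by simp)
  induction k using Int.induction_on with
  | zero =>
      have : t3 0 = 1 := by
        apply sl2_ext
        simp [t3, coe_mk2, Matrix.one_fin_two]
      rw [this]; exact one_mem _
  | succ k ih =>
      have : t3 (k + 1) = t3 k * Tcubed := by
        apply sl2_ext
        rw [Matrix.SpecialLinearGroup.coe_mul (A := t3 (k:ℤ))]
        show !![(1:ℤ), 3 * (k+1); 0, 1] = !![(1:ℤ), 3*k; 0, 1] * !![1, 3; 0, 1]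
        rw [Matrix.mul_fin_two]; apply mat2_ext <;> ring
      rw [this]; exact mul_mem ih hT
  | pred k ih =>
      have : t3 (-k - 1) * Tcubed = t3 (-k) := by
        apply sl2_ext
        rw [Matrix.SpecialLinearGroup.coe_mul (A := t3 (-(k:ℤ) - 1))]
        show !![(1:ℤ), 3 * (-k-1); 0, 1] * !![(1:ℤ), 3; 0, 1] = !![(1:ℤ), 3 * (-k:ℤ); 0, 1]
        rw [Matrix.mul_fin_two]; apply mat2_ext <;> ring
      have h2 : t3 (-k - 1) = t3 (-k) * Tcubed⁻¹ := by
        rw [← this, mul_assoc, mul_inv_cancel, mul_one]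
      rw [h2]; exact mul_mem ih (inv_mem hT)

lemma tp_mem (k : ℤ) : tp k ∈ Gam := by
  have hT : Tprime ∈ Gam := Subgroup.subset_closure (by simp)
  induction k using Int.induction_on with
  | zero =>
      have : tp 0 = 1 := by
        apply sl2_ext
        simp [tp, coe_mk2, Matrix.one_fin_two]
      rw [this]; exact one_mem _
  | succ k ih =>
      have : tp (k + 1) = tp k * Tprime := by
        apply sl2_ext
        rw [Matrix.SpecialLinearGroup.coe_mul (A := tp (k:ℤ))]
        show !![(1:ℤ), 0; -(k+1:ℤ), 1] = !![(1:ℤ), 0; -(k:ℤ), 1] * !![1, 0; -1, 1]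
        rw [Matrix.mul_fin_two]; apply mat2_ext <;> ring
      rw [this]; exact mul_mem ih hT
  | pred k ih =>
      have : tp (-k - 1) * Tprime = tp (-k) := by
        apply sl2_ext
        rw [Matrix.SpecialLinearGroup.coe_mul (A := tp (-(k:ℤ) - 1))]
        show !![(1:ℤ), 0; -(-k-1:ℤ), 1] * !![(1:ℤ), 0; -1, 1] = !![(1:ℤ), 0; -(-k:ℤ), 1]
        rw [Matrix.mul_fin_two]; apply mat2_ext <;> ring
      have h2 : tp (-k - 1) = tp (-k) * Tprime⁻¹ := by
        rw [← this, mul_assoc, mul_inv_cancel, mul_one]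
      rw [h2]; exact mul_mem ih (inv_mem hT)

lemma mul_tp (a b c d : ℤ) (h : a * d - b * c = 1) (k : ℤ) :
    mk2 a b c d h * tp k = mk2 (a - b * k) b (c - d * k) d (by linear_combination h) := by
  apply sl2_ext
  rw [Matrix.SpecialLinearGroup.coe_mul (A := mk2 a b c d h), coe_mk2, tp, coe_mk2, coe_mk2]
  rw [Matrix.mul_fin_two]; apply mat2_ext <;> ring

lemma mul_t3 (a b c d : ℤ) (h : a * d - b * c = 1) (m : ℤ) :
    mk2 a b c d h * t3 m = mk2 a (3 * m * a + b) c (3 * m * c + d) (by linear_combination h) := by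
  apply sl2_ext
  rw [Matrix.SpecialLinearGroup.coe_mul (A := mk2 a b c d h), coe_mk2, t3, coe_mk2, coe_mk2]
  rw [Matrix.mul_fin_two]; apply mat2_ext <;> ring

def reps : Fin 8 → SL2 :=
  ![mk2 1 0 0 1 (by ring), mk2 1 1 0 1 (by ring), mk2 1 2 0 1 (by ring),
    mk2 (-1) 0 0 (-1) (by ring), mk2 (-1) (-1) 0 (-1) (by ring), mk2 (-1) (-2) 0 (-1) (by ring),
    mk2 0 1 (-1) 0 (by ring), mk2 0 (-1) 1 0 (by ring)]

lemma reduce : ∀ n : ℕ, ∀ a b c d : ℤ, ∀ h : a * d - b * c = 1, d.natAbs = n →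
    ∃ i : Fin 8, ∃ γ ∈ Gam, mk2 a b c d h * γ = reps i := by
  intro n
  induction n using Nat.strong_induction_on with
  | _ n IH =>
  intro a b c d h hdn
  by_cases hd0 : d = 0
  · subst hd0
    have hbc : b * c = -1 := by linarith
    have hb : b = 1 ∨ b = -1 :=
      Int.isUnit_iff.mp (IsUnit.of_mul_eq_one (a := b) (-c) (by linarith))
    rcases hb with hb | hb
    · have hc : c = -1 := by subst hb; linarith
      subst hb; subst hc
      refine ⟨6, tp a, tp_mem _, ?_⟩
      rw [mul_tp]
      have h6 : reps 6 = mk2 0 1 (-1) 0 (by ring) := rfl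
      rw [h6]
      exact mk2_congr _ _ (by ring) rfl (by ring) rfl
    · have hc : c = 1 := by subst hb; linarith
      subst hb; subst hc
      refine ⟨7, tp (-a), tp_mem _, ?_⟩
      rw [mul_tp]
      have h7 : reps 7 = mk2 0 (-1) 1 0 (by ring) := rfl
      rw [h7]
      exact mk2_congr _ _ (by ring) rfl (by ring) rfl
  · have hdpos : 0 < d.natAbs := Int.natAbs_pos.mpr hd0
    set c' := Int.bmod c d.natAbs with hc'def
    have hdvd : d ∣ c' - c := Int.natAbs_dvd.mp (Int.dvd_bmod_sub_self)
    obtain ⟨k, hk⟩ := hdvd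
    have hcc : c' = c + d * k := by linarith
    have hbound : 2 * c'.natAbs ≤ d.natAbs := by
      have h1 := Int.le_bmod (x := c) (m := d.natAbs) hdpos
      have h2 := Int.bmod_lt (x := c) (m := d.natAbs) hdpos
      rw [← hc'def] at h1 h2
      omega
    have det1 : (a + b * k) * d - b * c' = 1 := by rw [hcc]; linear_combination h
    have e1 : mk2 a b c d h * tp (-k) = mk2 (a + b * k) b c' d det1 := by
      rw [mul_tp]
      exact mk2_congr _ _ (by ring) rfl (by linarith) rfl
    by_cases hc0 : c' = 0
    · have had : (a + b * k) * d = 1 := by rw [hc0] at det1; linarith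
      rcases Int.mul_eq_one_iff_eq_one_or_neg_one.mp had with ⟨ha1, hd1⟩ | ⟨ha1, hd1⟩
      · -- element is mk2 1 b 0 1
        set m : ℤ := -(b / 3) with hm
        have hj : b % 3 = 0 ∨ b % 3 = 1 ∨ b % 3 = 2 := by omega
        have harith : 3 * m * (a + b * k) + b = b % 3 := by rw [ha1]; omega
        have harith2 : 3 * m * c' + d = 1 := by rw [hc0, hd1]; ring
        rcases hj with hj | hj | hj
        · refine ⟨0, tp (-k) * t3 m, mul_mem (tp_mem _) (t3_mem _), ?_⟩
          rw [← mul_assoc, e1, mul_t3]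
          have h0 : reps 0 = mk2 1 0 0 1 (by ring) := rfl
          rw [h0]
          exact mk2_congr _ _ ha1 (by omega) (by rw [hc0]) harith2
        · refine ⟨1, tp (-k) * t3 m, mul_mem (tp_mem _) (t3_mem _), ?_⟩
          rw [← mul_assoc, e1, mul_t3]
          have h1 : reps 1 = mk2 1 1 0 1 (by ring) := rfl
          rw [h1]
          exact mk2_congr _ _ ha1 (by omega) (by rw [hc0]) harith2
        · refine ⟨2, tp (-k) * t3 m, mul_mem (tp_mem _) (t3_mem _), ?_⟩
          rw [← mul_assoc, e1, mul_t3]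
          have h2 : reps 2 = mk2 1 2 0 1 (by ring) := rfl
          rw [h2]
          exact mk2_congr _ _ ha1 (by omega) (by rw [hc0]) harith2
      · -- element is mk2 (-1) b 0 (-1)
        set m : ℤ := -((-b) / 3) with hm
        have hj : (-b) % 3 = 0 ∨ (-b) % 3 = 1 ∨ (-b) % 3 = 2 := by omega
        have harith : 3 * m * (a + b * k) + b = -((-b) % 3) := by rw [ha1]; omega
        have harith2 : 3 * m * c' + d = -1 := by rw [hc0, hd1]; ring
        rcases hj with hj | hj | hj
        · refine ⟨3, tp (-k) * t3 m, mul_mem (tp_mem _) (t3_mem _), ?_⟩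
          rw [← mul_assoc, e1, mul_t3]
          have h3 : reps 3 = mk2 (-1) 0 0 (-1) (by ring) := rfl
          rw [h3]
          exact mk2_congr _ _ ha1 (by omega) (by rw [hc0]) harith2
        · refine ⟨4, tp (-k) * t3 m, mul_mem (tp_mem _) (t3_mem _), ?_⟩
          rw [← mul_assoc, e1, mul_t3]
          have h4 : reps 4 = mk2 (-1) (-1) 0 (-1) (by ring) := rfl
          rw [h4]
          exact mk2_congr _ _ ha1 (by omega) (by rw [hc0]) harith2
        · refine ⟨5, tp (-k) * t3 m, mul_mem (tp_mem _) (t3_mem _), ?_⟩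
          rw [← mul_assoc, e1, mul_t3]
          have h5 : reps 5 = mk2 (-1) (-2) 0 (-1) (by ring) := rfl
          rw [h5]
          exact mk2_congr _ _ ha1 (by omega) (by rw [hc0]) harith2
    · have hc'pos : 0 < (3 * c').natAbs := by
        simp [Int.natAbs_mul]
        omega
      set d' := Int.bmod d (3 * c').natAbs with hd'def
      have hdvd2 : (3 * c') ∣ d' - d := Int.natAbs_dvd.mp (Int.dvd_bmod_sub_self)
      obtain ⟨m, hmeq⟩ := hdvd2
      have hdd : d' = 3 * m * c' + d := by linarith
      have hbound2 : 2 * d'.natAbs ≤ (3 * c').natAbs := by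
        have h1 := Int.le_bmod (x := d) (m := (3 * c').natAbs) hc'pos
        have h2 := Int.bmod_lt (x := d) (m := (3 * c').natAbs) hc'pos
        rw [← hd'def] at h1 h2
        omega
      have hlt : d'.natAbs < n := by
        have h3 : (3 * c').natAbs = 3 * c'.natAbs := by
          rw [Int.natAbs_mul]; rfl
        omega
      have det2 : (a + b * k) * d' - (3 * m * (a + b * k) + b) * c' = 1 := by
        rw [hdd]; linear_combination det1
      have e2 : mk2 (a + b * k) b c' d det1 * t3 m =
          mk2 (a + b * k) (3 * m * (a + b * k) + b) c' d' det2 := by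
        rw [mul_t3]
        exact mk2_congr _ _ rfl rfl rfl (by linarith)
      obtain ⟨i, γ, hγ, heq⟩ := IH d'.natAbs hlt (a + b * k) (3 * m * (a + b * k) + b) c' d' det2 rfl
      refine ⟨i, tp (-k) * (t3 m * γ), mul_mem (tp_mem _) (mul_mem (t3_mem _) hγ), ?_⟩
      rw [← mul_assoc, e1, ← mul_assoc, e2, heq]

def Hsub : Subgroup SL2 where
  carrier := {x | (((x : Matrix (Fin 2) (Fin 2) ℤ) 0 0 : ℤ) : ZMod 3) = 1 ∧
      (((x : Matrix (Fin 2) (Fin 2) ℤ) 0 1 : ℤ) : ZMod 3) = 0 ∧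
      (((x : Matrix (Fin 2) (Fin 2) ℤ) 1 1 : ℤ) : ZMod 3) = 1}
  one_mem' := by
    simp [Matrix.SpecialLinearGroup.coe_one, Matrix.one_apply]
  mul_mem' := by
    rintro x y ⟨hx1, hx2, hx3⟩ ⟨hy1, hy2, hy3⟩
    refine ⟨?_, ?_, ?_⟩ <;>
      simp only [Set.mem_setOf_eq, Matrix.SpecialLinearGroup.coe_mul, Matrix.mul_apply,
        Fin.sum_univ_two] <;> push_cast
    · rw [hx1, hy1, hx2]; ring
    · rw [hx2, hy2, hx1]; ring
    · rw [hy2, hx3, hy3]; ring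
  inv_mem' := by
    rintro x ⟨hx1, hx2, hx3⟩
    rw [Matrix.SpecialLinearGroup.SL2_inv_expl]
    refine ⟨?_, ?_, ?_⟩ <;>
      simp only [Set.mem_setOf_eq, Matrix.cons_val_zero, Matrix.cons_val_one, Matrix.head_cons] <;>
      push_cast
    · exact hx3
    · rw [hx2]; ring
    · exact hx1

lemma gam_le_H : Gam ≤ Hsub := by
  rw [Subgroup.closure_le]
  rintro x hx
  simp only [Set.mem_insert_iff, Set.mem_singleton_iff] at hx
  rcases hx with rfl | rfl
  · exact ⟨by decide, by decide, by decide⟩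
  · exact ⟨by decide, by decide, by decide⟩

instance decMemHsub (x : SL2) : Decidable (x ∈ Hsub) :=
  decidable_of_iff ((((x : Matrix (Fin 2) (Fin 2) ℤ) 0 0 : ℤ) : ZMod 3) = 1 ∧
      (((x : Matrix (Fin 2) (Fin 2) ℤ) 0 1 : ℤ) : ZMod 3) = 0 ∧
      (((x : Matrix (Fin 2) (Fin 2) ℤ) 1 1 : ℤ) : ZMod 3) = 1) Iff.rfl

lemma reps_inj : ∀ i j : Fin 8, (reps i)⁻¹ * reps j ∈ Hsub → i = j := by decide

end WingerAux

theorem winger_monodromy_index_eq_eight :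
    (Subgroup.closure {Tcubed, Tprime} : Subgroup (SpecialLinearGroup (Fin 2) ℤ)).index = 8 := by
  classical
  let f : Fin 8 → (WingerAux.SL2 ⧸ WingerAux.Gam) := fun i => QuotientGroup.mk (WingerAux.reps i)
  have hsurj : Function.Surjective f := by
    intro q
    induction q using QuotientGroup.induction_on with
    | H g =>
      have hdet : (g : Matrix (Fin 2) (Fin 2) ℤ) 0 0 * (g : Matrix (Fin 2) (Fin 2) ℤ) 1 1 -
          (g : Matrix (Fin 2) (Fin 2) ℤ) 0 1 * (g : Matrix (Fin 2) (Fin 2) ℤ) 1 0 = 1 := by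
        have h2 := g.2
        rwa [Matrix.det_fin_two] at h2
      have hg : g = WingerAux.mk2 _ _ _ _ hdet := WingerAux.sl2_ext (Matrix.eta_fin_two _)
      obtain ⟨i, γ, hγ, heq⟩ := WingerAux.reduce ((g : Matrix (Fin 2) (Fin 2) ℤ) 1 1).natAbs
        _ _ _ _ hdet rfl
      refine ⟨i, ?_⟩
      show QuotientGroup.mk (WingerAux.reps i) = _
      rw [← heq, QuotientGroup.mk_mul_of_mem _ hγ, ← hg]
  have hinj : Function.Injective f := by
    intro i j hij
    exact WingerAux.reps_inj i j (WingerAux.gam_le_H (QuotientGroup.eq.mp hij))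
  have hcard : Nat.card (Fin 8) = Nat.card (WingerAux.SL2 ⧸ WingerAux.Gam) :=
    Nat.card_eq_of_bijective f ⟨hinj, hsurj⟩
  have hidx : (Subgroup.closure {Tcubed, Tprime} :
      Subgroup (SpecialLinearGroup (Fin 2) ℤ)).index = Nat.card (WingerAux.SL2 ⧸ WingerAux.Gam) := rfl
  rw [hidx, ← hcard]
  simp
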